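/- Let G be a finite connected claw-free block graph with at least two blocks. Then the number of cut vertices of G equals the number of blocks of G minus one. -/

import Mathlib

open scoped Classical

/-- A rooted `X`-tree on vertex type `V`: a finite rooted tree encoded by a parent
function, whose leaves (the vertices with no children) are bijectively labelled by `X`. -/
structure XTree (X V : Type) where
  root : V
  parent : V → V
  parent_root : parent root = root
  reaches : ∀ v : V, ∃ n : ℕ, parent^[n] v = root
  leaf : X → V
  leaf_inj : Function.Injective leaf
  leaf_iff : ∀ v : V, (∀ w : V, parent w = v → w = v) ↔ v ∈ Set.range leaf

namespace XTree

variable {X V : Type}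

/-- The children of a vertex. -/
def children (T : XTree X V) (v : V) : Set V := {w | T.parent w = v ∧ w ≠ v}

def IsLeaf (T : XTree X V) (v : V) : Prop := v ∈ Set.range T.leaf

def Interior (T : XTree X V) (v : V) : Prop := ¬ T.IsLeaf v

/-- Phylogenetic: root has at least two children, and no non-root vertex has exactly
one child (no degree-two vertices apart from possibly the root). -/
def IsPhylo (T : XTree X V) : Prop :=
  2 ≤ (T.children T.root).ncard ∧
    ∀ v : V, v ≠ T.root → T.Interior v → 2 ≤ (T.children v).ncard

/-- `T.Desc v w` : `w` is a descendant of `v` (or equal to `v`). -/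
def Desc (T : XTree X V) (v w : V) : Prop := ∃ n : ℕ, T.parent^[n] w = v

/-- The set of leaf labels below a vertex. -/
def leafSet (T : XTree X V) (v : V) : Set X := {x | T.Desc v (T.leaf x)}

/-- `v` is the last common ancestor of the set `S` of vertices. -/
def IsLCA (T : XTree X V) (v : V) (S : Set V) : Prop :=
  (∀ w ∈ S, T.Desc v w) ∧ ∀ u : V, (∀ w ∈ S, T.Desc u w) → T.Desc u v

/-- Not a star tree: some interior vertex other than the root. -/
def NonDegenerate (T : XTree X V) : Prop := ∃ v : V, T.Interior v ∧ v ≠ T.root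

end XTree

/-- A cord: a 2-element subset of `X`. -/
def IsCord {X : Type} (c : Set X) : Prop := ∃ a b : X, a ≠ b ∧ c = {a, b}

/-- The graph `Γ(L)` with vertex set `X` and edge set `L`. -/
def cordGraph {X : Type} (L : Set (Set X)) : SimpleGraph X where
  Adj a b := a ≠ b ∧ ({a, b} : Set X) ∈ L
  symm := by
    constructor; intro a b h
    exact ⟨Ne.symm h.1, by rw [Set.pair_comm]; exact h.2⟩
  loopless := by constructor; intro a h; exact h.1 rfl

/-- Topological lasso, via the child-edge graph characterization: for every interior
vertex, any two distinct child subtrees are joined by a cord of `L`. -/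
def XTree.IsTopoLasso {X V : Type} (T : XTree X V) (L : Set (Set X)) : Prop :=
  ∀ v c₁ c₂ : V, c₁ ∈ T.children v → c₂ ∈ T.children v → c₁ ≠ c₂ →
    ∃ a b : X, a ∈ T.leafSet c₁ ∧ b ∈ T.leafSet c₂ ∧ ({a, b} : Set X) ∈ L

/-- Set-inclusion minimal topological lasso. -/
def XTree.IsMinTopoLasso {X V : Type} (T : XTree X V) (L : Set (Set X)) : Prop :=
  T.IsTopoLasso L ∧ ∀ L' ⊆ L, T.IsTopoLasso L' → L' = L

/-- A nonempty vertex set inducing a connected subgraph with no cut vertex. -/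
def GoodSet {α : Type} (G : SimpleGraph α) (B : Set α) : Prop :=
  B.Nonempty ∧ (G.induce B).Connected ∧
    ∀ v ∈ B, (B \ {v}).Nonempty → (G.induce (B \ {v})).Connected

/-- A block: a maximal connected induced subgraph without a cut vertex. -/
def IsBlock {α : Type} (G : SimpleGraph α) (B : Set α) : Prop :=
  GoodSet G B ∧ ∀ C : Set α, GoodSet G C → B ⊆ C → B = C

/-- A block graph: every block is a clique. -/
def IsBlockGraph {α : Type} (G : SimpleGraph α) : Prop :=
  ∀ B : Set α, IsBlock G B → G.IsClique B

/-- A cut vertex: deleting it disconnects the graph. -/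
def IsCutVtx {α : Type} (G : SimpleGraph α) (v : α) : Prop :=
  ¬ (G.induce {w | w ≠ v}).Connected

/-- Claw-free: no induced `K_{1,3}`. -/
def ClawFree {α : Type} (G : SimpleGraph α) : Prop :=
  ¬ ∃ v a b c : α, a ≠ b ∧ a ≠ c ∧ b ≠ c ∧
    G.Adj v a ∧ G.Adj v b ∧ G.Adj v c ∧ ¬ G.Adj a b ∧ ¬ G.Adj a c ∧ ¬ G.Adj b c

/-- The child-edge graph `G(L,v)`: vertices are the children of `v` (equivalently
the child edges of `v`), two of them adjacent if a cord of `L` joins their subtrees. -/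
def childGraph {X V : Type} (T : XTree X V) (L : Set (Set X)) (v : V) :
    SimpleGraph {c : V // c ∈ T.children v} where
  Adj c₁ c₂ := c₁ ≠ c₂ ∧ ∃ a b : X,
    a ∈ T.leafSet (c₁ : V) ∧ b ∈ T.leafSet (c₂ : V) ∧ ({a, b} : Set X) ∈ L
  symm := by
    constructor; rintro c₁ c₂ ⟨h, a, b, ha, hb, hm⟩
    exact ⟨Ne.symm h, b, a, hb, ha, by rw [Set.pair_comm]; exact hm⟩
  loopless := by constructor; rintro c ⟨h, -⟩; exact h rfl

/-- `cl(T)`: the clusters of non-root interior vertices. -/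
def clSet {X V : Type} (T : XTree X V) : Set (Set X) :=
  {A | ∃ v : V, v ≠ T.root ∧ T.Interior v ∧ A = T.leafSet v}

/-- A cluster marker map for `T` and the ordering of `X`:
`f A` is the `σ`-least element of `A` not used as marker of a proper subcluster. -/
def IsClusterMarker {X V : Type} [LinearOrder X] (T : XTree X V) (f : Set X → X) : Prop :=
  ∀ A ∈ clSet T,
    ((∃ B ∈ clSet T, B ⊂ A) →
      IsLeast (A \ {y | ∃ B ∈ clSet T, B ⊂ A ∧ f B = y}) (f A)) ∧
    ((¬ ∃ B ∈ clSet T, B ⊂ A) → IsLeast A (f A))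

/-- The marker of a child `c` of an interior vertex: the label of `c` if `c` is a leaf,
and `f (L(c))` if `c` is interior. -/
def markRel {X V : Type} (T : XTree X V) (f : Set X → X) (c : V) (a : X) : Prop :=
  T.leaf a = c ∨ (T.Interior c ∧ a = f (T.leafSet c))

/-- `L_{(T,f)}(v)`: all cords between markers of distinct children of `v`. -/
def lassoAt {X V : Type} (T : XTree X V) (f : Set X → X) (v : V) : Set (Set X) :=
  {c | ∃ c₁ c₂ : V, c₁ ∈ T.children v ∧ c₂ ∈ T.children v ∧ c₁ ≠ c₂ ∧
    ∃ a b : X, markRel T f c₁ a ∧ markRel T f c₂ b ∧ c = {a, b}}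

/-- `L_{(T,f)}`: the union over all interior vertices of `L_{(T,f)}(v)`. -/
def lassoFull {X V : Type} (T : XTree X V) (f : Set X → X) : Set (Set X) :=
  {c | ∃ v : V, T.Interior v ∧ c ∈ lassoAt T f v}

/-- An equidistant proper edge-weighting of `T`, encoded by the height function
`t v` = distance from `v` to any leaf below it (so all leaves are equidistant
from the root); properness: interior edges have positive weight. -/
def EquidistantProper {X V : Type} (T : XTree X V) (t : V → ℝ) : Prop :=
  (∀ x : X, t (T.leaf x) = 0) ∧ (∀ v : V, t v ≤ t (T.parent v)) ∧
    ∀ v : V, v ≠ T.root → T.Interior v → t v < t (T.parent v)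

/-- Equivalence of two `X`-trees: a root-, parent- and labelling-preserving bijection. -/
def TreeEquiv {X V V' : Type} (T : XTree X V) (T' : XTree X V') : Prop :=
  ∃ φ : V ≃ V', φ T.root = T'.root ∧ (∀ v, φ (T.parent v) = T'.parent (φ v)) ∧
    ∀ x, φ (T.leaf x) = T'.leaf x

/-- `S` is (equivalent to) the restriction `T|_Y`: the clusters of `S` are exactly the
nonempty traces on `Y` of the clusters of `T`. -/
def IsRestriction {X : Type} (Y : Set X) {V W : Type}
    (T : XTree X V) (S : XTree (↥Y) W) : Prop :=
  ∀ A : Set X, A ⊆ Y →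
    ((∃ w : W, A = Subtype.val '' S.leafSet w) ↔ (A.Nonempty ∧ ∃ v : V, A = T.leafSet v ∩ Y))

/-- The restriction `L|_Y` of a set of cords of `X` to cords of `Y`. -/
def restrictLasso {X : Type} (Y : Set X) (L : Set (Set X)) : Set (Set ↥Y) :=
  {c | ∃ a b : ↥Y, a ≠ b ∧ c = {a, b} ∧ ({(a : X), (b : X)} : Set X) ∈ L}

section BlockGraphAux

open SimpleGraph Walk

variable {α : Type} {G : SimpleGraph α}

private lemma reach_of_walk {S : Set α} :
    ∀ {a b : α} (p : G.Walk a b), (∀ c ∈ p.support, c ∈ S) →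
      ∀ (ha : a ∈ S) (hb : b ∈ S), (G.induce S).Reachable ⟨a, ha⟩ ⟨b, hb⟩ := by
  intro a b p
  induction p with
  | nil => intro _ ha hb; exact Reachable.refl _
  | @cons a c b h q ih =>
      intro hs ha hb
      have hc : c ∈ S := hs c (by simp)
      have hadj : (G.induce S).Adj ⟨a, ha⟩ ⟨c, hc⟩ := h
      exact hadj.reachable.trans (ih (fun d hd => hs d (by simp [hd])) hc hb)

private lemma connected_induce_singleton (v : α) : (G.induce {v}).Connected := by
  rw [connected_iff_exists_forall_reachable]
  refine ⟨⟨v, rfl⟩, fun w => ?_⟩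
  have : w = ⟨v, rfl⟩ := Subtype.ext w.2
  rw [this]

private lemma goodSet_singleton (v : α) : GoodSet G {v} := by
  refine ⟨⟨v, rfl⟩, connected_induce_singleton v, ?_⟩
  intro w hw hne
  rw [Set.mem_singleton_iff] at hw
  subst hw
  simp at hne

private lemma goodSet_pair {u v : α} (h : G.Adj u v) : GoodSet G {u, v} := by
  have hne : u ≠ v := h.ne
  refine ⟨⟨u, Or.inl rfl⟩, induce_pair_connected_of_adj h, ?_⟩
  intro w hw _
  rcases hw with rfl | hw
  · have hs : ({w, v} : Set α) \ {w} = {v} := by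
      ext z
      simp only [Set.mem_diff, Set.mem_insert_iff, Set.mem_singleton_iff]
      constructor
      · rintro ⟨rfl | rfl, h2⟩
        · exact absurd rfl h2
        · rfl
      · rintro rfl; exact ⟨Or.inr rfl, fun hh => hne hh.symm⟩
    rw [hs]
    exact connected_induce_singleton v
  · rw [Set.mem_singleton_iff] at hw
    subst hw
    have hs : ({u, w} : Set α) \ {w} = {u} := by
      ext z
      simp only [Set.mem_diff, Set.mem_insert_iff, Set.mem_singleton_iff]
      constructor
      · rintro ⟨rfl | rfl, h2⟩
        · rfl
        · exact absurd rfl h2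
      · rintro rfl; exact ⟨Or.inl rfl, hne⟩
    rw [hs]
    exact connected_induce_singleton u

private lemma exists_block_superset [Fintype α] {A : Set α} (hA : GoodSet G A) :
    ∃ B : Set α, IsBlock G B ∧ A ⊆ B := by
  obtain ⟨B, hB, hmax⟩ := Set.Finite.exists_maximalFor Set.ncard
    {C : Set α | GoodSet G C ∧ A ⊆ C} (Set.toFinite _) ⟨A, hA, subset_rfl⟩
  refine ⟨B, ⟨hB.1, ?_⟩, hB.2⟩
  intro C hC hBC
  have hcard := hmax (j := C) ⟨hC, hB.2.trans hBC⟩ (Set.ncard_le_ncard hBC (Set.toFinite C))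
  exact Set.eq_of_subset_of_ncard_le hBC hcard (Set.toFinite C)

private lemma goodSet_union {B C : Set α} (hB : GoodSet G B) (hC : GoodSet G C)
    {u v : α} (hu : u ∈ B ∩ C) (hv : v ∈ B ∩ C) (huv : u ≠ v) : GoodSet G (B ∪ C) := by
  refine ⟨hB.1.mono Set.subset_union_left,
    induce_union_connected hB.2.1.preconnected hC.2.1.preconnected ⟨u, hu⟩, ?_⟩
  intro w hw _
  rw [Set.union_diff_distrib]
  by_cases huw : u = w
  · subst huw
    have hvw : v ≠ u := huv.symm
    have hBconn : (G.induce (B \ {u})).Connected := by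
      by_cases hwB : u ∈ B
      · exact hB.2.2 u hwB ⟨v, hv.1, hvw⟩
      · rw [Set.diff_singleton_eq_self hwB]; exact hB.2.1
    have hCconn : (G.induce (C \ {u})).Connected := by
      by_cases hwC : u ∈ C
      · exact hC.2.2 u hwC ⟨v, hv.2, hvw⟩
      · rw [Set.diff_singleton_eq_self hwC]; exact hC.2.1
    exact induce_union_connected hBconn.preconnected hCconn.preconnected ⟨v, ⟨hv.1, hvw⟩, ⟨hv.2, hvw⟩⟩
  · have huw' : u ≠ w := huw
    have hBconn : (G.induce (B \ {w})).Connected := by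
      by_cases hwB : w ∈ B
      · exact hB.2.2 w hwB ⟨u, hu.1, huw'⟩
      · rw [Set.diff_singleton_eq_self hwB]; exact hB.2.1
    have hCconn : (G.induce (C \ {w})).Connected := by
      by_cases hwC : w ∈ C
      · exact hC.2.2 w hwC ⟨u, hu.2, huw'⟩
      · rw [Set.diff_singleton_eq_self hwC]; exact hC.2.1
    exact induce_union_connected hBconn.preconnected hCconn.preconnected ⟨u, ⟨hu.1, huw'⟩, ⟨hu.2, huw'⟩⟩

private lemma block_eq_of_two_common {B B' : Set α} (hB : IsBlock G B) (hB' : IsBlock G B')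
    {u v : α} (hu : u ∈ B ∩ B') (hv : v ∈ B ∩ B') (huv : u ≠ v) : B = B' := by
  have hg := goodSet_union hB.1 hB'.1 hu hv huv
  have h1 := hB.2 _ hg Set.subset_union_left
  have h2 := hB'.2 _ hg Set.subset_union_right
  rw [h1, ← h2]

private lemma takeUntil_not_mem {x y u w : α} (p : G.Walk x y) (hp : p.IsPath)
    (hw : w ∈ p.support) (hu : u ∈ (p.takeUntil w hw).support) (huw : u ≠ w) :
    w ∉ ((p.takeUntil w hw).takeUntil u hu).support := by
  classical
  intro hcon
  have hnodup : (p.takeUntil w hw).support.Nodup := (hp.takeUntil hw).support_nodup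
  have hsup : (p.takeUntil w hw).support =
      ((p.takeUntil w hw).takeUntil u hu).support ++
        ((p.takeUntil w hw).dropUntil u hu).support.tail := by
    rw [← support_append, take_spec]
  rw [hsup] at hnodup
  have hdisj := (List.nodup_append.mp hnodup).2.2
  have hwd : w ∈ ((p.takeUntil w hw).dropUntil u hu).support.tail := by
    have hend : w ∈ ((p.takeUntil w hw).dropUntil u hu).support := end_mem_support _
    rw [support_eq_cons] at hend
    rcases List.mem_cons.mp hend with h | h
    · exact absurd h.symm huw
    · exact h
  exact hdisj w hcon w hwd rfl

private lemma dropUntil_not_mem {x y u w : α} (p : G.Walk x y) (hp : p.IsPath)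
    (hw : w ∈ p.support) (hu : u ∈ (p.dropUntil w hw).support) (huw : u ≠ w) :
    w ∉ ((p.dropUntil w hw).dropUntil u hu).support := by
  classical
  intro hcon
  have hnodup : (p.dropUntil w hw).support.Nodup := (hp.dropUntil hw).support_nodup
  have hsup : (p.dropUntil w hw).support =
      ((p.dropUntil w hw).takeUntil u hu).support ++
        ((p.dropUntil w hw).dropUntil u hu).support.tail := by
    rw [← support_append, take_spec]
  rw [hsup] at hnodup
  have hdisj := (List.nodup_append.mp hnodup).2.2
  have hwt : w ∈ ((p.dropUntil w hw).takeUntil u hu).support := start_mem_support _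
  have hcon' : w ∈ ((p.dropUntil w hw).dropUntil u hu).support.tail := by
    rw [support_eq_cons] at hcon
    rcases List.mem_cons.mp hcon with h | h
    · exact absurd h.symm huw
    · exact h
  exact hdisj w hwt w hcon' rfl

private lemma connected_del_first {x y : α} (p : G.Walk x y) (hp : p.IsPath) (hxy : x ≠ y) :
    (G.induce ({a | a ∈ p.support} \ {x})).Connected := by
  obtain ⟨c, h, q, rfl⟩ := Walk.exists_eq_cons_of_ne hxy p
  have hxq : x ∉ q.support := ((cons_isPath_iff h q).mp hp).2
  have hset : {a | a ∈ (Walk.cons h q).support} \ {x} = {a | a ∈ q.support} := by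
    ext z
    simp only [support_cons, List.mem_cons, Set.mem_diff, Set.mem_setOf_eq,
      Set.mem_singleton_iff]
    constructor
    · rintro ⟨h1 | h1, h2⟩
      · exact absurd h1 h2
      · exact h1
    · intro hz; exact ⟨Or.inr hz, fun he => hxq (he ▸ hz)⟩
  rw [hset]
  exact q.connected_induce_support

private lemma goodSet_cycle {x y : α} (p : G.Walk x y) (hp : p.IsPath) (hxy : G.Adj x y) :
    GoodSet G {a | a ∈ p.support} := by
  classical
  refine ⟨⟨x, p.start_mem_support⟩, p.connected_induce_support, ?_⟩
  intro w hw _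
  by_cases hwx : w = x
  · subst hwx; exact connected_del_first p hp hxy.ne
  by_cases hwy : w = y
  · subst hwy
    have hcd := connected_del_first p.reverse hp.reverse hxy.ne'
    have hset : {a | a ∈ p.reverse.support} \ {w} = {a | a ∈ p.support} \ {w} := by
      ext z; simp [support_reverse]
    rwa [hset] at hcd
  · have hw' : w ∈ p.support := hw
    rw [connected_iff_exists_forall_reachable]
    have hxS : x ∈ {a | a ∈ p.support} \ {w} :=
      ⟨p.start_mem_support, fun h => hwx (Set.mem_singleton_iff.mp h).symm⟩
    have hyS : y ∈ {a | a ∈ p.support} \ {w} :=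
      ⟨p.end_mem_support, fun h => hwy (Set.mem_singleton_iff.mp h).symm⟩
    refine ⟨⟨x, hxS⟩, ?_⟩
    rintro ⟨u, hus, huw⟩
    have hune : u ≠ w := fun h => huw (Set.mem_singleton_iff.mpr h)
    have hsplit : u ∈ (p.takeUntil w hw').support ∨ u ∈ (p.dropUntil w hw').support := by
      have hmem : u ∈ (p.takeUntil w hw').support ++ (p.dropUntil w hw').support.tail := by
        rw [← support_append, take_spec]; exact hus
      rcases List.mem_append.mp hmem with h | h
      · exact Or.inl h
      · exact Or.inr (List.mem_of_mem_tail h)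
    rcases hsplit with h | h
    · have hWsub : ∀ c ∈ ((p.takeUntil w hw').takeUntil u h).support,
          c ∈ {a | a ∈ p.support} \ {w} := by
        intro c hc
        refine ⟨p.support_takeUntil_subset hw' (support_takeUntil_subset _ h hc), ?_⟩
        intro hcw
        rw [Set.mem_singleton_iff] at hcw
        subst hcw
        exact takeUntil_not_mem p hp hw' h hune hc
      exact reach_of_walk _ hWsub hxS ⟨hus, huw⟩
    · have hWsub : ∀ c ∈ ((p.dropUntil w hw').dropUntil u h).support,
          c ∈ {a | a ∈ p.support} \ {w} := by
        intro c hc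
        refine ⟨p.support_dropUntil_subset hw' (support_dropUntil_subset _ h hc), ?_⟩
        intro hcw
        rw [Set.mem_singleton_iff] at hcw
        subst hcw
        exact dropUntil_not_mem p hp hw' h hune hc
      have r1 := reach_of_walk _ hWsub (⟨hus, huw⟩ : u ∈ {a | a ∈ p.support} \ {w}) hyS
      have r2 : (G.induce ({a | a ∈ p.support} \ {w})).Adj ⟨y, hyS⟩ ⟨x, hxS⟩ := hxy.symm
      exact ((r1.trans r2.reachable)).symm

end BlockGraphAux

section BlockGraphAux2

open SimpleGraph Walk

variable {α : Type} {G : SimpleGraph α}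

private lemma cut_of_two_blocks [Fintype α] (hbg : IsBlockGraph G) {v : α} {B B' : Set α}
    (hB : IsBlock G B) (hB' : IsBlock G B') (hne : B ≠ B') (hvB : v ∈ B) (hvB' : v ∈ B')
    (hx : ∃ x ∈ B, x ≠ v) (hy : ∃ y ∈ B', y ≠ v) : IsCutVtx G v := by
  classical
  obtain ⟨x, hxB, hxv⟩ := hx
  obtain ⟨y, hyB, hyv⟩ := hy
  have hxy : x ≠ y := by
    rintro rfl
    exact hne (block_eq_of_two_common hB hB' ⟨hvB, hvB'⟩ ⟨hxB, hyB⟩ (Ne.symm hxv))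
  have hadjvx : G.Adj v x := hbg B hB hvB hxB (Ne.symm hxv)
  have hadjvy : G.Adj v y := hbg B' hB' hvB' hyB (Ne.symm hyv)
  intro hcon
  obtain ⟨W⟩ := hcon.preconnected ⟨x, hxv⟩ ⟨y, hyv⟩
  have hWs : ∀ c ∈ (W.map (SimpleGraph.Embedding.induce {w | w ≠ v}).toHom).support, c ≠ v := by
    intro c hc
    rw [Walk.support_map] at hc
    obtain ⟨⟨c', hc'⟩, _, rfl⟩ := List.mem_map.mp hc
    exact hc'
  set W' := W.map (SimpleGraph.Embedding.induce {w | w ≠ v}).toHom with hW'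
  have hP : W'.bypass.IsPath := W'.bypass_isPath
  have hvP : v ∉ W'.bypass.support := fun hc => (hWs v (W'.support_bypass_subset hc)) rfl
  have hQ : (Walk.cons hadjvx W'.bypass).IsPath := hP.cons hvP
  obtain ⟨Bc, hBc, hsub⟩ := exists_block_superset (goodSet_cycle _ hQ hadjvy)
  have hvQ : v ∈ (Walk.cons hadjvx W'.bypass).support := start_mem_support _
  have hxQ : x ∈ (Walk.cons hadjvx W'.bypass).support := by
    exact List.mem_cons_of_mem _ W'.bypass.start_mem_support
  have hyQ : y ∈ (Walk.cons hadjvx W'.bypass).support := by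
    exact List.mem_cons_of_mem _ W'.bypass.end_mem_support
  have e1 : Bc = B := block_eq_of_two_common hBc hB ⟨hsub hvQ, hvB⟩ ⟨hsub hxQ, hxB⟩
    (G.ne_of_adj hadjvx)
  have e2 : Bc = B' := block_eq_of_two_common hBc hB' ⟨hsub hvQ, hvB'⟩ ⟨hsub hyQ, hyB⟩
    (G.ne_of_adj hadjvy)
  exact hne (e1.symm.trans e2)

private lemma two_blocks_of_cut [Fintype α] (hconn : G.Connected) (hbg : IsBlockGraph G)
    (hnt : Nontrivial α) {v : α} (hcut : IsCutVtx G v) :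
    ∃ B B' : Set α, IsBlock G B ∧ IsBlock G B' ∧ B ≠ B' ∧ v ∈ B ∧ v ∈ B' := by
  classical
  by_contra hno
  push_neg at hno
  obtain ⟨B₀, hB₀, hsub₀⟩ := exists_block_superset (goodSet_singleton (G := G) v)
  have hvB₀ : v ∈ B₀ := hsub₀ rfl
  have huniq : ∀ B : Set α, IsBlock G B → v ∈ B → B = B₀ := by
    intro B hB hvB
    by_contra hne
    exact hno B B₀ hB hB₀ hne hvB hvB₀
  apply hcut
  have hreach : ∀ (a b : α) (ha : a ≠ v) (hb : b ≠ v),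
      (G.induce {w | w ≠ v}).Reachable ⟨a, ha⟩ ⟨b, hb⟩ := by
    intro a b ha hb
    obtain ⟨W⟩ := hconn.preconnected a b
    have hPp : W.bypass.IsPath := W.bypass_isPath
    by_cases hvP : v ∈ W.bypass.support
    · set P := W.bypass with hPdef
      have hp₁ : (P.takeUntil v hvP).IsPath := hPp.takeUntil hvP
      have hp₂ : (P.dropUntil v hvP).IsPath := hPp.dropUntil hvP
      obtain ⟨x, hvx, r₁, hr₁⟩ := Walk.exists_eq_cons_of_ne (Ne.symm ha) (P.takeUntil v hvP).reverse
      have hr₁path : (Walk.cons hvx r₁).IsPath := hr₁ ▸ hp₁.reverse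
      have hvr₁ : v ∉ r₁.support := ((cons_isPath_iff hvx r₁).mp hr₁path).2
      obtain ⟨y, hvy, r₂, hr₂⟩ := Walk.exists_eq_cons_of_ne (Ne.symm hb) (P.dropUntil v hvP)
      have hr₂path : (Walk.cons hvy r₂).IsPath := hr₂ ▸ hp₂
      have hvr₂ : v ∉ r₂.support := ((cons_isPath_iff hvy r₂).mp hr₂path).2
      have hxB₀ : x ∈ B₀ := by
        obtain ⟨Bx, hBx, hsubx⟩ := exists_block_superset (goodSet_pair hvx)
        have heq := huniq Bx hBx (hsubx (Or.inl rfl))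
        rw [← heq]
        exact hsubx (Or.inr rfl)
      have hyB₀ : y ∈ B₀ := by
        obtain ⟨By, hBy, hsuby⟩ := exists_block_superset (goodSet_pair hvy)
        have heq := huniq By hBy (hsuby (Or.inl rfl))
        rw [← heq]
        exact hsuby (Or.inr rfl)
      by_cases hxy : x = y
      · subst hxy
        refine reach_of_walk (r₁.reverse.append r₂) ?_ ha hb
        intro c hc
        show c ≠ v
        rintro rfl
        rw [support_append] at hc
        rcases List.mem_append.mp hc with h | h
        · exact hvr₁ (by rwa [support_reverse, List.mem_reverse] at h)
        · exact hvr₂ (List.mem_of_mem_tail h)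
      · have hadjxy : G.Adj x y := hbg B₀ hB₀ hxB₀ hyB₀ hxy
        refine reach_of_walk (r₁.reverse.append (Walk.cons hadjxy r₂)) ?_ ha hb
        intro c hc
        show c ≠ v
        rintro rfl
        rw [support_append] at hc
        rcases List.mem_append.mp hc with h | h
        · exact hvr₁ (by rwa [support_reverse, List.mem_reverse] at h)
        · rw [support_cons, List.tail_cons] at h
          rcases List.mem_cons.mp (support_eq_cons r₂ ▸ h) with h' | h'
          · exact (G.ne_of_adj hvy) h'
          · exact hvr₂ (List.mem_of_mem_tail (support_eq_cons r₂ ▸ h'))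
    · refine reach_of_walk W.bypass ?_ ha hb
      intro c hc
      show c ≠ v
      rintro rfl
      exact hvP hc
  rw [connected_iff_exists_forall_reachable]
  obtain ⟨u₀, hu₀⟩ := exists_ne v
  exact ⟨⟨u₀, hu₀⟩, fun b => hreach u₀ b.1 hu₀ b.2⟩

private lemma not_three_blocks [Fintype α] (hcf : ClawFree G) (hbg : IsBlockGraph G)
    (hbig : ∀ B : Set α, IsBlock G B → ∀ v ∈ B, ∃ u ∈ B, u ≠ v)
    {v : α} {B₁ B₂ B₃ : Set α} (h1 : IsBlock G B₁) (h2 : IsBlock G B₂) (h3 : IsBlock G B₃)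
    (h12 : B₁ ≠ B₂) (h13 : B₁ ≠ B₃) (h23 : B₂ ≠ B₃)
    (hv1 : v ∈ B₁) (hv2 : v ∈ B₂) (hv3 : v ∈ B₃) : False := by
  obtain ⟨x₁, hx₁, hx₁v⟩ := hbig B₁ h1 v hv1
  obtain ⟨x₂, hx₂, hx₂v⟩ := hbig B₂ h2 v hv2
  obtain ⟨x₃, hx₃, hx₃v⟩ := hbig B₃ h3 v hv3
  have hvx₁ : G.Adj v x₁ := hbg B₁ h1 hv1 hx₁ (Ne.symm hx₁v)
  have hvx₂ : G.Adj v x₂ := hbg B₂ h2 hv2 hx₂ (Ne.symm hx₂v)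
  have hvx₃ : G.Adj v x₃ := hbg B₃ h3 hv3 hx₃ (Ne.symm hx₃v)
  have hxne : ∀ {Bi Bj : Set α} {xi xj : α}, IsBlock G Bi → IsBlock G Bj → Bi ≠ Bj →
      v ∈ Bi → v ∈ Bj → xi ∈ Bi → xj ∈ Bj → xi ≠ v → xi ≠ xj := by
    intro Bi Bj xi xj hBi hBj hBij hvi hvj hxi hxj hxiv h
    subst h
    exact hBij (block_eq_of_two_common hBi hBj ⟨hvi, hvj⟩ ⟨hxi, hxj⟩ (Ne.symm hxiv))
  have hne12 : x₁ ≠ x₂ := hxne h1 h2 h12 hv1 hv2 hx₁ hx₂ hx₁v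
  have hne13 : x₁ ≠ x₃ := hxne h1 h3 h13 hv1 hv3 hx₁ hx₃ hx₁v
  have hne23 : x₂ ≠ x₃ := hxne h2 h3 h23 hv2 hv3 hx₂ hx₃ hx₂v
  have hnadj : ∀ {Bi Bj : Set α} {xi xj : α}, IsBlock G Bi → IsBlock G Bj → Bi ≠ Bj →
      v ∈ Bi → v ∈ Bj → xi ∈ Bi → xj ∈ Bj → xi ≠ v → xj ≠ v → xi ≠ xj → ¬ G.Adj xi xj := by
    intro Bi Bj xi xj hBi hBj hBij hvi hvj hxi hxj hxiv hxjv hxixj hadj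
    have hvxi : G.Adj v xi := hbg Bi hBi hvi hxi (Ne.symm hxiv)
    have hvxj : G.Adj v xj := hbg Bj hBj hvj hxj (Ne.symm hxjv)
    have hQ : (Walk.cons hvxi (Walk.cons hadj Walk.nil)).IsPath := by
      rw [cons_isPath_iff]
      refine ⟨?_, ?_⟩
      · rw [cons_isPath_iff]
        exact ⟨IsPath.nil, by simp [hxixj]⟩
      · simp only [support_cons, support_nil, List.mem_cons, List.mem_singleton]
        push_neg
        exact ⟨Ne.symm hxiv, Ne.symm hxjv, by simp⟩
    obtain ⟨Bc, hBc, hsubc⟩ := exists_block_superset (goodSet_cycle _ hQ hvxj)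
    have hvQ : v ∈ (Walk.cons hvxi (Walk.cons hadj Walk.nil)).support := start_mem_support _
    have hxiQ : xi ∈ (Walk.cons hvxi (Walk.cons hadj Walk.nil)).support := by
      simp [support_cons]
    have hxjQ : xj ∈ (Walk.cons hvxi (Walk.cons hadj Walk.nil)).support := by
      simp [support_cons]
    have e1 : Bc = Bi := block_eq_of_two_common hBc hBi ⟨hsubc hvQ, hvi⟩ ⟨hsubc hxiQ, hxi⟩
      (G.ne_of_adj hvxi)
    have e2 : Bc = Bj := block_eq_of_two_common hBc hBj ⟨hsubc hvQ, hvj⟩ ⟨hsubc hxjQ, hxj⟩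
      (G.ne_of_adj hvxj)
    exact hBij (e1.symm.trans e2)
  exact hcf ⟨v, x₁, x₂, x₃, hne12, hne13, hne23, hvx₁, hvx₂, hvx₃,
    hnadj h1 h2 h12 hv1 hv2 hx₁ hx₂ hx₁v hx₂v hne12,
    hnadj h1 h3 h13 hv1 hv3 hx₁ hx₃ hx₁v hx₃v hne13,
    hnadj h2 h3 h23 hv2 hv3 hx₂ hx₃ hx₂v hx₃v hne23⟩

private lemma path_getVert_inj :
    ∀ {x y : α} (p : G.Walk x y), p.IsPath → ∀ i j, i ≤ p.length → j ≤ p.length →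
      p.getVert i = p.getVert j → i = j := by
  intro x y p
  induction p with
  | nil => intro _ i j hi hj _; simp only [length_nil, Nat.le_zero] at hi hj; omega
  | @cons a c b h q ih =>
      intro hp i j hi hj heq
      rw [length_cons] at hi hj
      have hq : q.IsPath := ((cons_isPath_iff h q).mp hp).1
      have hna : a ∉ q.support := ((cons_isPath_iff h q).mp hp).2
      match i, j with
      | 0, 0 => rfl
      | 0, j+1 =>
          exfalso
          rw [getVert_zero, getVert_cons_succ] at heq
          exact hna (mem_support_iff_exists_getVert.mpr ⟨j, heq.symm, by omega⟩)
      | i+1, 0 =>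
          exfalso
          rw [getVert_zero, getVert_cons_succ] at heq
          exact hna (mem_support_iff_exists_getVert.mpr ⟨i, heq, by omega⟩)
      | i+1, j+1 =>
          rw [getVert_cons_succ, getVert_cons_succ] at heq
          have := ih hq i j (by omega) (by omega) heq
          omega

private lemma chain_walk (v : ℕ → α) :
    ∀ m : ℕ, (∀ i, i < m → G.Adj (v i) (v (i+1))) →
      ∃ p : G.Walk (v 0) (v m), p.support = (List.range (m+1)).map v := by
  intro m
  induction m with
  | zero => intro _; exact ⟨Walk.nil, by rw [List.range_succ]; simp⟩
  | succ m ih =>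
      intro hadj
      obtain ⟨p, hp⟩ := ih (fun i hi => hadj i (by omega))
      refine ⟨p.concat (hadj m (by omega)), ?_⟩
      rw [support_concat, hp]
      conv_rhs => rw [List.range_succ]
      rw [List.map_append]
      simp

end BlockGraphAux2

/-- The block intersection graph: vertices are blocks, adjacent iff distinct and intersecting. -/
private def blockGraph {α : Type} (G : SimpleGraph α) :
    SimpleGraph {B : Set α // IsBlock G B} where
  Adj B B' := B ≠ B' ∧ ((B : Set α) ∩ (B' : Set α)).Nonempty
  symm := by
    constructor; rintro B B' ⟨h, w, hw⟩
    exact ⟨Ne.symm h, w, hw.2, hw.1⟩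
  loopless := by constructor; rintro B ⟨h, -⟩; exact h rfl

section MainProof

open SimpleGraph Walk

theorem stmt4' {α : Type} [Fintype α] (G : SimpleGraph α)
    (hconn : G.Connected) (hcf : ClawFree G) (hbg : IsBlockGraph G)
    (h2 : 2 ≤ {B : Set α | IsBlock G B}.ncard) :
    {v : α | IsCutVtx G v}.ncard = {B : Set α | IsBlock G B}.ncard - 1 := by
  classical
  obtain ⟨Ba, hBa, Bb, hBb, hab⟩ :=
    (Set.one_lt_ncard (Set.toFinite _)).mp (lt_of_lt_of_le one_lt_two h2)
  have hBa : IsBlock G Ba := hBa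
  have hBb : IsBlock G Bb := hBb
  have hnt : Nontrivial α := by
    by_contra hsub
    rw [not_nontrivial_iff_subsingleton] at hsub
    apply hab
    obtain ⟨a, ha⟩ := hBa.1.1
    obtain ⟨b, hb⟩ := hBb.1.1
    ext z
    constructor
    · intro _; exact (Subsingleton.elim b z) ▸ hb
    · intro _; exact (Subsingleton.elim a z) ▸ ha
  have hnbr : ∀ w : α, ∃ u, G.Adj w u := by
    intro w
    obtain ⟨u, hu⟩ := exists_ne w
    obtain ⟨W⟩ := hconn.preconnected w u
    cases W with
    | nil => exact absurd rfl (Ne.symm hu)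
    | cons h q => exact ⟨_, h⟩
  have hbig : ∀ B : Set α, IsBlock G B → ∀ v ∈ B, ∃ u ∈ B, u ≠ v := by
    intro B hB v hv
    by_contra hc
    push_neg at hc
    have hBv : B = {v} := by
      ext z
      constructor
      · intro hz; exact hc z hz
      · intro hz; rw [Set.mem_singleton_iff] at hz; subst hz; exact hv
    obtain ⟨u, hu⟩ := hnbr v
    have hBe := hB.2 {v, u} (goodSet_pair hu)
      (by rw [hBv]; exact Set.singleton_subset_iff.mpr (Or.inl rfl))
    have huB : u ∈ B := by rw [hBe]; exact Or.inr rfl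
    rw [hBv, Set.mem_singleton_iff] at huB
    exact (G.ne_of_adj hu) huB.symm
  have hcut_iff : ∀ v : α, IsCutVtx G v ↔
      ∃ B B' : Set α, IsBlock G B ∧ IsBlock G B' ∧ B ≠ B' ∧ v ∈ B ∧ v ∈ B' := by
    intro v
    constructor
    · exact two_blocks_of_cut hconn hbg hnt
    · rintro ⟨B, B', hB, hB', hne, hvB, hvB'⟩
      exact cut_of_two_blocks hbg hB hB' hne hvB hvB' (hbig B hB v hvB) (hbig B' hB' v hvB')
  -- the block graph is connected
  have hHconn : (blockGraph G).Connected := by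
    have key : ∀ {u u' : α} (W : G.Walk u u'), ∀ (B B' : {B : Set α // IsBlock G B}),
        u ∈ B.1 → u' ∈ B'.1 → (blockGraph G).Reachable B B' := by
      intro u u' W
      induction W with
      | nil =>
          intro B B' hu hu'
          by_cases h : B = B'
          · exact h ▸ Reachable.refl B
          · exact SimpleGraph.Adj.reachable ⟨h, _, hu, hu'⟩
      | @cons a c b h q ih =>
          intro B B' hu hu'
          obtain ⟨B₁, hB₁, hsub⟩ := exists_block_superset (goodSet_pair h)
          have haB₁ : a ∈ B₁ := hsub (Or.inl rfl)
          have hcB₁ : c ∈ B₁ := hsub (Or.inr rfl)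
          have step : (blockGraph G).Reachable B ⟨B₁, hB₁⟩ := by
            by_cases hEq : B = ⟨B₁, hB₁⟩
            · exact hEq ▸ Reachable.refl _
            · exact SimpleGraph.Adj.reachable ⟨hEq, _, hu, haB₁⟩
          exact step.trans (ih ⟨B₁, hB₁⟩ B' hcB₁ hu')
    rw [connected_iff_exists_forall_reachable]
    refine ⟨⟨Ba, hBa⟩, fun B' => ?_⟩
    obtain ⟨u, hu⟩ := hBa.1.1
    obtain ⟨u', hu'⟩ := B'.2.1.1
    obtain ⟨W⟩ := hconn.preconnected u u'
    exact key W ⟨Ba, hBa⟩ B' hu hu'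
  -- the block graph is acyclic
  have hHacyc : (blockGraph G).IsAcyclic := by
    intro B c hc
    have h3 := hc.three_le_length
    cases c with
    | nil => simp at h3
    | @cons _ B₁ _ hadj q =>
      rw [Walk.cons_isCycle_iff] at hc
      obtain ⟨hq, -⟩ := hc
      rw [length_cons] at h3
      have hm2 : 2 ≤ q.length := by omega
      set m := q.length with hm
      have hb0 : q.getVert 0 = B₁ := getVert_zero q
      have hbm : q.getVert m = B := getVert_length q
      have hAdj : ∀ i, i ≤ m →
          (blockGraph G).Adj (q.getVert i) (if i < m then q.getVert (i+1) else q.getVert 0) := by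
        intro i hi
        by_cases h : i < m
        · rw [if_pos h]; exact q.adj_getVert_succ h
        · have hieq : i = m := by omega
          subst hieq
          rw [if_neg h, hbm, hb0]
          exact hadj
      have hex : ∀ i, i ≤ m → ∃ x, x ∈ (q.getVert i).1 ∧
          x ∈ ((if i < m then q.getVert (i+1) else q.getVert 0) : {B : Set α // IsBlock G B}).1 := by
        intro i hi
        obtain ⟨x, hx⟩ := (hAdj i hi).2
        exact ⟨x, hx.1, hx.2⟩
      have hmm : (0 : ℕ) ≤ m := Nat.zero_le m
      set vv : ℕ → α := fun i => if hi : i ≤ m then (hex i hi).choose else (hex 0 hmm).choose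
        with hvv
      have hvmem1 : ∀ i (hi : i ≤ m), vv i ∈ (q.getVert i).1 := by
        intro i hi
        rw [hvv]
        simp only [dif_pos hi]
        exact (hex i hi).choose_spec.1
      have hvmem2 : ∀ i (hi : i ≤ m),
          vv i ∈ ((if i < m then q.getVert (i+1) else q.getVert 0) :
            {B : Set α // IsBlock G B}).1 := by
        intro i hi
        rw [hvv]
        simp only [dif_pos hi]
        exact (hex i hi).choose_spec.2
      have hvmem2' : ∀ i (hi : i < m), vv i ∈ (q.getVert (i+1)).1 := by
        intro i hi
        have := hvmem2 i (le_of_lt hi)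
        rwa [if_pos hi] at this
      have hvmem2m : vv m ∈ (q.getVert 0).1 := by
        have := hvmem2 m le_rfl
        rwa [if_neg (lt_irrefl m)] at this
      have binj : ∀ i j, i ≤ m → j ≤ m → q.getVert i = q.getVert j → i = j :=
        fun i j hi hj => path_getVert_inj q hq i j hi hj
      have bne : ∀ i j, i ≤ m → j ≤ m → i ≠ j → (q.getVert i).1 ≠ (q.getVert j).1 := by
        intro i j hi hj hij heq
        exact hij (binj i j hi hj (Subtype.ext heq))
      have h3b : ∀ (u : α) (i j k : ℕ), i ≤ m → j ≤ m → k ≤ m → i ≠ j → i ≠ k → j ≠ k →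
          u ∈ (q.getVert i).1 → u ∈ (q.getVert j).1 → u ∈ (q.getVert k).1 → False := by
        intro u i j k hi hj hk hij hik hjk hui huj huk
        exact not_three_blocks hcf hbg hbig (q.getVert i).2 (q.getVert j).2 (q.getVert k).2
          (bne i j hi hj hij) (bne i k hi hk hik) (bne j k hj hk hjk) hui huj huk
      have vlt : ∀ i j, i < j → j ≤ m → vv i ≠ vv j := by
        intro i j hij hj heq
        have him : i < m := lt_of_lt_of_le hij hj
        have hi : i ≤ m := le_of_lt him
        have hu1 : vv i ∈ (q.getVert i).1 := hvmem1 i hi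
        have hu2 : vv i ∈ (q.getVert (i+1)).1 := hvmem2' i him
        have hu3 : vv i ∈ (q.getVert j).1 := by rw [heq]; exact hvmem1 j hj
        by_cases hjm : j < m
        · have hu4 : vv i ∈ (q.getVert (j+1)).1 := by rw [heq]; exact hvmem2' j hjm
          exact h3b (vv i) i j (j+1) hi hj (by omega) (by omega) (by omega) (by omega)
            hu1 hu3 hu4
        · have hjm' : j = m := by omega
          subst hjm'
          have hu4 : vv i ∈ (q.getVert 0).1 := by rw [heq]; exact hvmem2m
          by_cases hi0 : i = 0
          · subst hi0
            exact h3b (vv 0) 0 1 m (by omega) (by omega) le_rfl (by omega) (by omega)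
              (by omega) hu1 hu2 hu3
          · exact h3b (vv i) 0 i m (by omega) hi le_rfl (by omega) (by omega) (by omega)
              hu4 hu1 hu3
      have vne : ∀ i j, i ≤ m → j ≤ m → i ≠ j → vv i ≠ vv j := by
        intro i j hi hj hij
        rcases lt_or_gt_of_ne hij with h | h
        · exact vlt i j h hj
        · exact (vlt j i h hi).symm
      have vadj : ∀ i, i < m → G.Adj (vv i) (vv (i+1)) := by
        intro i hi
        have hm1 : vv i ∈ (q.getVert (i+1)).1 := hvmem2' i hi
        have hm2' : vv (i+1) ∈ (q.getVert (i+1)).1 := hvmem1 (i+1) hi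
        exact hbg _ (q.getVert (i+1)).2 hm1 hm2' (vne i (i+1) (by omega) hi (by omega))
      have vadj0 : G.Adj (vv 0) (vv m) := by
        have hm1 : vv 0 ∈ (q.getVert 0).1 := hvmem1 0 hmm
        exact hbg _ (q.getVert 0).2 hm1 hvmem2m (vne 0 m hmm le_rfl (by omega))
      obtain ⟨p, hp⟩ := chain_walk vv m vadj
      have hpnodup : p.support.Nodup := by
        rw [hp]
        refine List.Nodup.map_on ?_ List.nodup_range
        intro i hi j hj hf
        rw [List.mem_range] at hi hj
        by_contra hne
        exact vne i j (by omega) (by omega) hne hf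
      have hppath : p.IsPath := IsPath.mk' hpnodup
      obtain ⟨Bc, hBc, hsubc⟩ := exists_block_superset (goodSet_cycle p hppath vadj0)
      have hvmemp : ∀ i, i ≤ m → vv i ∈ {a | a ∈ p.support} := by
        intro i hi
        show vv i ∈ p.support
        rw [hp]
        exact List.mem_map_of_mem (List.mem_range.mpr (by omega))
      have e1 : Bc = (q.getVert 1).1 := by
        refine block_eq_of_two_common hBc (q.getVert 1).2
          ⟨hsubc (hvmemp 0 hmm), hvmem2' 0 (by omega)⟩
          ⟨hsubc (hvmemp 1 (by omega)), hvmem1 1 (by omega)⟩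
          (vne 0 1 hmm (by omega) (by omega))
      have e2 : Bc = (q.getVert 2).1 := by
        refine block_eq_of_two_common hBc (q.getVert 2).2
          ⟨hsubc (hvmemp 1 (by omega)), hvmem2' 1 (by omega)⟩
          ⟨hsubc (hvmemp 2 hm2), hvmem1 2 hm2⟩
          (vne 1 2 (by omega) hm2 (by omega))
      exact bne 1 2 (by omega) hm2 (by omega) (e1.symm.trans e2)
  have hTree : (blockGraph G).IsTree := ⟨hHconn, hHacyc⟩
  -- counting
  have hcv : ∀ v : {v : α // IsCutVtx G v}, ∃ B B' : {B : Set α // IsBlock G B},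
      B ≠ B' ∧ v.1 ∈ B.1 ∧ v.1 ∈ B'.1 := by
    intro v
    obtain ⟨B, B', hB, hB', hne, hv1, hv2⟩ := (hcut_iff v.1).mp v.2
    exact ⟨⟨B, hB⟩, ⟨B', hB'⟩, fun h => hne (congrArg Subtype.val h), hv1, hv2⟩
  choose f1 f2 hfne hf1 hf2 using hcv
  have hmemEdge : ∀ v, s(f1 v, f2 v) ∈ (blockGraph G).edgeSet :=
    fun v => ⟨hfne v, v.1, hf1 v, hf2 v⟩
  have hinj : Function.Injective
      (fun v => (⟨s(f1 v, f2 v), hmemEdge v⟩ : (blockGraph G).edgeSet)) := by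
    intro v u hvu
    simp only [Subtype.mk.injEq, Sym2.eq, Sym2.rel_iff', Prod.mk.injEq, Prod.swap_prod_mk]
      at hvu
    apply Subtype.ext
    by_contra hne
    rcases hvu with ⟨h1, h2⟩ | ⟨h1, h2⟩
    · refine (hfne v) (Subtype.ext (block_eq_of_two_common (f1 v).2 (f2 v).2
        ⟨hf1 v, hf2 v⟩ ⟨?_, ?_⟩ hne))
      · rw [h1]; exact hf1 u
      · rw [h2]; exact hf2 u
    · refine (hfne v) (Subtype.ext (block_eq_of_two_common (f1 v).2 (f2 v).2
        ⟨hf1 v, hf2 v⟩ ⟨?_, ?_⟩ hne))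
      · rw [h1]; exact hf2 u
      · rw [h2]; exact hf1 u
  have hsurjkey : ∀ (B B' : {B : Set α // IsBlock G B}), (blockGraph G).Adj B B' →
      ∃ v : {v : α // IsCutVtx G v}, s(f1 v, f2 v) = s(B, B') := by
    intro B B' hadj'
    obtain ⟨hne, w, hw1, hw2⟩ := hadj'
    have hwcut : IsCutVtx G w := (hcut_iff w).mpr
      ⟨B.1, B'.1, B.2, B'.2, fun h => hne (Subtype.ext h), hw1, hw2⟩
    have hmem : ∀ C : {B : Set α // IsBlock G B}, w ∈ C.1 → C = B ∨ C = B' := by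
      intro C hC
      by_contra hcon
      push_neg at hcon
      exact not_three_blocks hcf hbg hbig C.2 B.2 B'.2
        (fun h => hcon.1 (Subtype.ext h)) (fun h => hcon.2 (Subtype.ext h))
        (fun h => hne (Subtype.ext h)) hC hw1 hw2
    have h1 := hmem (f1 ⟨w, hwcut⟩) (hf1 ⟨w, hwcut⟩)
    have h2 := hmem (f2 ⟨w, hwcut⟩) (hf2 ⟨w, hwcut⟩)
    refine ⟨⟨w, hwcut⟩, ?_⟩
    rcases h1 with h1 | h1 <;> rcases h2 with h2 | h2
    · exact absurd (h1.trans h2.symm) (hfne _)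
    · rw [h1, h2]
    · rw [h1, h2, Sym2.eq_swap]
    · exact absurd (h1.trans h2.symm) (hfne _)
  have hsurj : Function.Surjective
      (fun v => (⟨s(f1 v, f2 v), hmemEdge v⟩ : (blockGraph G).edgeSet)) := by
    rintro ⟨e, he⟩
    obtain ⟨v, hv⟩ : ∃ v : {v : α // IsCutVtx G v}, s(f1 v, f2 v) = e := by
      revert he
      refine Sym2.ind (fun B B' he => ?_) e
      exact hsurjkey B B' ((SimpleGraph.mem_edgeSet _).mp he)
    exact ⟨v, Subtype.ext hv⟩
  have e : {v : α // IsCutVtx G v} ≃ (blockGraph G).edgeSet :=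
    Equiv.ofBijective _ ⟨hinj, hsurj⟩
  have hcount : {v : α | IsCutVtx G v}.ncard = (blockGraph G).edgeFinset.card := by
    calc {v : α | IsCutVtx G v}.ncard
        = Nat.card {v : α | IsCutVtx G v} := (Nat.card_coe_set_eq _).symm
      _ = Nat.card (blockGraph G).edgeSet :=
          Nat.card_congr ((Equiv.subtypeEquivRight (fun v => Iff.rfl)).trans e)
      _ = Fintype.card (blockGraph G).edgeSet := Nat.card_eq_fintype_card
      _ = (blockGraph G).edgeFinset.card := (SimpleGraph.edgeFinset_card).symm
  have hblockcount : {B : Set α | IsBlock G B}.ncard =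
      Fintype.card {B : Set α // IsBlock G B} := by
    rw [← Nat.card_coe_set_eq, Nat.card_eq_fintype_card]
    exact Fintype.card_congr (Equiv.subtypeEquivRight (fun B => Iff.rfl))
  have hfin := hTree.card_edgeFinset
  rw [hcount, hblockcount]
  omega


end MainProof

/-- a finite connected claw-free block graph with at least two blocks has
exactly (number of blocks) - 1 cut vertices. -/
theorem stmt4 {α : Type} [Fintype α] (G : SimpleGraph α)
    (hconn : G.Connected) (hcf : ClawFree G) (hbg : IsBlockGraph G)
    (h2 : 2 ≤ {B : Set α | IsBlock G B}.ncard) :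
    {v : α | IsCutVtx G v}.ncard = {B : Set α | IsBlock G B}.ncard - 1 := by
  exact stmt4' G hconn hcf hbg h2
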